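/- Let W = S_n with Bruhat order ≤ and length ℓ, let w ∈ W and let s be an adjacent transposition with ℓ(s w s) = ℓ(w) + 2. Then there is no element v ≤ w with ℓ(v) = ℓ(w) − 1 such that sv = vs and ℓ(sv) = ℓ(v) − 1. -/

import Mathlib

open Equiv

/-- The Coxeter length of a permutation of `Fin n`: its number of inversions. -/
def invLength {n : ℕ} (w : Perm (Fin n)) : ℕ :=
  (Finset.univ.filter (fun p : Fin n × Fin n => p.1 < p.2 ∧ w p.2 < w p.1)).card

/-- The Bruhat order on `S_n`: `v ≤ w` iff `w` is obtained from `v` by a chain of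
multiplications by transpositions, each strictly increasing the number of inversions. -/
def bruhatLE {n : ℕ} (v w : Perm (Fin n)) : Prop :=
  Relation.ReflTransGen
    (fun a b => (∃ i j : Fin n, i ≠ j ∧ b = a * Equiv.swap i j) ∧ invLength a < invLength b)
    v w

namespace BruhatAux

variable {n : ℕ}

def Inv (u : Perm (Fin n)) : Finset (Fin n × Fin n) :=
  Finset.univ.filter (fun p => p.1 < p.2 ∧ u p.2 < u p.1)

lemma invLength_eq (u : Perm (Fin n)) : invLength u = (Inv u).card := rfl

lemma mem_Inv {u : Perm (Fin n)} {p : Fin n × Fin n} :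
    p ∈ Inv u ↔ p.1 < p.2 ∧ u p.2 < u p.1 := by
  simp [Inv]

lemma invLength_inv (u : Perm (Fin n)) : invLength u⁻¹ = invLength u := by
  rw [invLength_eq, invLength_eq]
  apply Finset.card_bij' (fun p _ => (u⁻¹ p.2, u⁻¹ p.1)) (fun p _ => (u p.2, u p.1))
  · intro p hp
    rw [mem_Inv] at hp ⊢
    exact ⟨hp.2, by simpa using hp.1⟩
  · intro p hp
    rw [mem_Inv] at hp ⊢
    exact ⟨hp.2, by simpa using hp.1⟩
  · intro p _; simp
  · intro p _; simp

lemma invLength_mul_swap_lt {u : Perm (Fin n)} {i j : Fin n} (hij : i < j) (hu : u j < u i) :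
    invLength (u * Equiv.swap i j) < invLength u := by
  have hmem : (i, j) ∈ Inv u := mem_Inv.2 ⟨hij, hu⟩
  set t := Equiv.swap i j with ht
  have hcard : (Inv (u * t)).card ≤ ((Inv u).erase (i, j)).card := by
    apply Finset.card_le_card_of_injOn
      (fun p => if t p.1 < t p.2 then (t p.1, t p.2) else p)
    · intro p hp
      simp only [Finset.mem_coe] at hp ⊢
      rw [mem_Inv] at hp
      obtain ⟨hp1, hp2⟩ := hp
      simp only [Perm.mul_apply] at hp2
      by_cases hb : t p.1 < t p.2
      · simp only [hb, if_true]
        rw [Finset.mem_erase, mem_Inv]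
        refine ⟨?_, hb, hp2⟩
        intro hcontra
        have h1 : t p.1 = i := congrArg Prod.fst hcontra
        have h2 : t p.2 = j := congrArg Prod.snd hcontra
        have e1 : p.1 = j := by
          have := congrArg t h1; simpa [ht] using this
        have e2 : p.2 = i := by
          have := congrArg t h2; simpa [ht] using this
        rw [e1, e2] at hp1
        exact absurd (hp1.trans hij) (lt_irrefl j)
      · simp only [hb, if_false]
        rw [Finset.mem_erase, mem_Inv]
        have hval : u p.2 < u p.1 := by
          by_cases hxi : p.1 = i
          · by_cases hyj : p.2 = j
            · rw [hxi, hyj]; exact hu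
            · have hyi : p.2 ≠ i := by
                intro hc; rw [hxi, hc] at hp1; exact lt_irrefl _ hp1
              have hty : t p.2 = p.2 := Equiv.swap_apply_of_ne_of_ne hyi hyj
              have htx : t p.1 = j := by rw [hxi]; exact Equiv.swap_apply_left i j
              rw [hty, htx] at hp2
              rw [hxi]
              exact hp2.trans hu
          · by_cases hxj : p.1 = j
            · -- p.2 > j, t p.1 = i, t p.2 = p.2 > j > i: contradiction with hb
              exfalso
              have hy2 : j < p.2 := hxj ▸ hp1
              have hyi : p.2 ≠ i := fun hc => absurd (hc ▸ hy2) (not_lt.2 hij.le)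
              have hyj : p.2 ≠ j := ne_of_gt hy2
              have := Equiv.swap_apply_of_ne_of_ne hyi hyj
              apply hb
              show (Equiv.swap i j) p.1 < (Equiv.swap i j) p.2
              rw [this, hxj, Equiv.swap_apply_right]
              exact hij.trans hy2
            · have htx : t p.1 = p.1 := Equiv.swap_apply_of_ne_of_ne hxi hxj
              by_cases hyi : p.2 = i
              · exfalso
                apply hb
                rw [htx, hyi, ht, Equiv.swap_apply_left]
                exact (hyi ▸ hp1).trans hij
              · by_cases hyj : p.2 = j
                · rw [htx, hyj] at hp2
                  rw [ht, Equiv.swap_apply_right] at hp2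
                  rw [hyj]
                  exact hu.trans hp2
                · exfalso
                  apply hb
                  rw [htx, Equiv.swap_apply_of_ne_of_ne hyi hyj]
                  exact hp1
        refine ⟨?_, hp1, hval⟩
        intro hc
        have e1 : p.1 = i := congrArg Prod.fst hc
        have e2 : p.2 = j := congrArg Prod.snd hc
        rw [e1, e2] at hp2
        rw [ht, Equiv.swap_apply_left, Equiv.swap_apply_right] at hp2
        exact absurd hu (not_lt.2 hp2.le)
    · intro p hp q hq hfq
      simp only [Finset.mem_coe, mem_Inv] at hp hq
      simp only at hfq
      by_cases hbp : t p.1 < t p.2 <;> by_cases hbq : t q.1 < t q.2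
      · simp only [hbp, hbq, if_true] at hfq
        have h1 : t p.1 = t q.1 := congrArg Prod.fst hfq
        have h2 : t p.2 = t q.2 := congrArg Prod.snd hfq
        exact Prod.ext (t.injective h1) (t.injective h2)
      · simp only [hbp, hbq, if_true, if_false] at hfq
        exfalso
        apply hbq
        have h1 : t p.1 = q.1 := congrArg Prod.fst hfq
        have h2 : t p.2 = q.2 := congrArg Prod.snd hfq
        have e1 : t q.1 = p.1 := by rw [← h1, ht, Equiv.swap_apply_self]
        have e2 : t q.2 = p.2 := by rw [← h2, ht, Equiv.swap_apply_self]
        rw [e1, e2]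
        exact hp.1
      · simp only [hbp, hbq, if_true, if_false] at hfq
        exfalso
        apply hbp
        have h1 : p.1 = t q.1 := congrArg Prod.fst hfq
        have h2 : p.2 = t q.2 := congrArg Prod.snd hfq
        have e1 : t p.1 = q.1 := by rw [h1, ht, Equiv.swap_apply_self]
        have e2 : t p.2 = q.2 := by rw [h2, ht, Equiv.swap_apply_self]
        rw [e1, e2]
        exact hq.1
      · simpa [hbp, hbq] using hfq
  rw [Finset.card_erase_of_mem hmem] at hcard
  have hpos : 0 < (Inv u).card := Finset.card_pos.2 ⟨_, hmem⟩
  rw [invLength_eq, invLength_eq]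
  omega

lemma invLength_lt_mul_swap {u : Perm (Fin n)} {i j : Fin n} (hij : i < j) (hu : u i < u j) :
    invLength u < invLength (u * Equiv.swap i j) := by
  have h1 : (u * Equiv.swap i j) j < (u * Equiv.swap i j) i := by
    simp [Perm.mul_apply, Equiv.swap_apply_left, Equiv.swap_apply_right, hu]
  have := invLength_mul_swap_lt hij h1
  rwa [mul_assoc, Equiv.swap_mul_self, mul_one] at this


lemma swap_adj_lt {a b : Fin n} (hab : (b : ℕ) = (a : ℕ) + 1) {x y : Fin n} (hxy : x < y)
    (hne : ¬(x = a ∧ y = b)) : Equiv.swap a b x < Equiv.swap a b y := by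
  have hab' : a < b := by rw [Fin.lt_def]; omega
  rw [Fin.lt_def] at hxy ⊢
  by_cases hxa : x = a
  · have hyb : y ≠ b := fun hc => hne ⟨hxa, hc⟩
    have hya : y ≠ a := by
      intro hc; rw [hxa, hc] at hxy; omega
    rw [hxa, Equiv.swap_apply_left, Equiv.swap_apply_of_ne_of_ne hya hyb]
    have h1 : (a : ℕ) < (y : ℕ) := hxa ▸ hxy
    have h2 : (y : ℕ) ≠ (b : ℕ) := fun hc => hyb (Fin.ext hc)
    omega
  · by_cases hxb : x = b
    · have hya : y ≠ a := by
        intro hc; rw [hxb, hc] at hxy; omega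
      have hyb : y ≠ b := by
        intro hc; rw [hxb, hc] at hxy; omega
      rw [hxb, Equiv.swap_apply_right, Equiv.swap_apply_of_ne_of_ne hya hyb]
      have : (b : ℕ) < (y : ℕ) := hxb ▸ hxy
      omega
    · rw [Equiv.swap_apply_of_ne_of_ne hxa hxb]
      by_cases hya : y = a
      · rw [hya, Equiv.swap_apply_left]
        have : (x : ℕ) < (a : ℕ) := hya ▸ hxy
        omega
      · by_cases hyb : y = b
        · rw [hyb, Equiv.swap_apply_right]
          have h1 : (x : ℕ) < (b : ℕ) := hyb ▸ hxy
          have h2 : (x : ℕ) ≠ (a : ℕ) := fun hc => hxa (Fin.ext hc)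
          omega
        · rw [Equiv.swap_apply_of_ne_of_ne hya hyb]
          exact hxy

lemma invLength_mul_adjswap_le {a b : Fin n} (hab : (b : ℕ) = (a : ℕ) + 1) (u : Perm (Fin n)) :
    invLength (u * Equiv.swap a b) ≤ invLength u + 1 := by
  set t := Equiv.swap a b with ht
  have hcard : (Inv (u * t)).card ≤ (insert ((a : Fin n), b) (Inv u)).card := by
    apply Finset.card_le_card_of_injOn
      (fun p => if p = (a, b) then (a, b) else (t p.1, t p.2))
    · intro p hp
      simp only [Finset.mem_coe] at hp ⊢
      rw [mem_Inv] at hp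
      obtain ⟨hp1, hp2⟩ := hp
      simp only [Perm.mul_apply] at hp2
      by_cases hpe : p = (a, b)
      · simp [hpe]
      · simp only [hpe, if_false]
        rw [Finset.mem_insert, mem_Inv]
        right
        refine ⟨?_, hp2⟩
        apply swap_adj_lt hab hp1
        intro ⟨h1, h2⟩
        exact hpe (Prod.ext h1 h2)
    · intro p hp q hq hfq
      simp only [Finset.mem_coe, mem_Inv] at hp hq
      simp only at hfq
      by_cases hpe : p = (a, b) <;> by_cases hqe : q = (a, b)
      · rw [hpe, hqe]
      · simp only [hpe, hqe, if_true, if_false] at hfq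
        exfalso
        have h1 : a = t q.1 := congrArg Prod.fst hfq
        have h2 : b = t q.2 := congrArg Prod.snd hfq
        have e1 : q.1 = b := by
          have := congrArg t h1
          rw [ht, Equiv.swap_apply_self] at this
          rw [← this]; exact Equiv.swap_apply_left a b
        have e2 : q.2 = a := by
          have := congrArg t h2
          rw [ht, Equiv.swap_apply_self] at this
          rw [← this]; exact Equiv.swap_apply_right a b
        have := hq.1
        rw [e1, e2, Fin.lt_def] at this
        omega
      · simp only [hpe, hqe, if_true, if_false] at hfq
        exfalso
        have h1 : t p.1 = a := congrArg Prod.fst hfq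
        have h2 : t p.2 = b := congrArg Prod.snd hfq
        have e1 : p.1 = b := by
          have := congrArg t h1
          rw [ht, Equiv.swap_apply_self] at this
          rw [this]; exact Equiv.swap_apply_left a b
        have e2 : p.2 = a := by
          have := congrArg t h2
          rw [ht, Equiv.swap_apply_self] at this
          rw [this]; exact Equiv.swap_apply_right a b
        have := hp.1
        rw [e1, e2, Fin.lt_def] at this
        omega
      · simp only [hpe, hqe, if_false] at hfq
        have h1 : t p.1 = t q.1 := congrArg Prod.fst hfq
        have h2 : t p.2 = t q.2 := congrArg Prod.snd hfq
        exact Prod.ext (t.injective h1) (t.injective h2)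
  calc invLength (u * t) = (Inv (u * t)).card := invLength_eq _
    _ ≤ (insert ((a : Fin n), b) (Inv u)).card := hcard
    _ ≤ (Inv u).card + 1 := Finset.card_insert_le _ _
    _ = invLength u + 1 := by rw [invLength_eq]

lemma invLength_adjswap_mul_le {a b : Fin n} (hab : (b : ℕ) = (a : ℕ) + 1) (u : Perm (Fin n)) :
    invLength (Equiv.swap a b * u) ≤ invLength u + 1 := by
  have h1 : invLength (Equiv.swap a b * u) = invLength (u⁻¹ * Equiv.swap a b) := by
    rw [← invLength_inv (Equiv.swap a b * u), mul_inv_rev, Equiv.swap_inv]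
  rw [h1, ← invLength_inv u]
  exact invLength_mul_adjswap_le hab u⁻¹

lemma bruhat_mono {v w : Perm (Fin n)}
    (h : Relation.ReflTransGen
      (fun x y => (∃ i j : Fin n, i ≠ j ∧ y = x * Equiv.swap i j) ∧ invLength x < invLength y)
      v w) : invLength v ≤ invLength w := by
  induction h with
  | refl => exact le_refl _
  | tail _ hstep ih => exact le_trans ih (le_of_lt hstep.2)


lemma cover_step {v w : Perm (Fin n)}
    (h : Relation.ReflTransGen
      (fun x y => (∃ i j : Fin n, i ≠ j ∧ y = x * Equiv.swap i j) ∧ invLength x < invLength y)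
      v w)
    (hl : invLength w = invLength v + 1) :
    ∃ i j : Fin n, i ≠ j ∧ w = v * Equiv.swap i j := by
  rcases Relation.ReflTransGen.cases_head h with rfl | ⟨u, hstep, hrest⟩
  · omega
  · obtain ⟨⟨i, j, hij, hu⟩, hlt⟩ := hstep
    have hle : invLength u ≤ invLength w := bruhat_mono hrest
    have huw : u = w := by
      rcases Relation.ReflTransGen.cases_head hrest with rfl | ⟨u', hstep', hrest'⟩
      · rfl
      · exfalso
        have := bruhat_mono hrest'
        have := hstep'.2
        omega
    exact ⟨i, j, hij, by rw [← huw, hu]⟩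


lemma helper1 {v w : Perm (Fin n)} {a b k : Fin n} (hab : (b : ℕ) = (a : ℕ) + 1)
    (hka : k ≠ a) (hkb : k ≠ b) (hva : v a = b) (hvb : v b = a)
    (hw : w = v * Equiv.swap a k) (hlen : invLength w = invLength v + 1)
    (hBab : w a < w b) (hBinv : w⁻¹ a < w⁻¹ b) : False := by
  have hab' : a < b := by rw [Fin.lt_def]; omega
  have wb : w b = a := by
    rw [hw, Perm.mul_apply, Equiv.swap_apply_of_ne_of_ne (ne_of_gt hab') (Ne.symm hkb), hvb]
  have wk : w k = b := by
    rw [hw, Perm.mul_apply, Equiv.swap_apply_right, hva]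
  have wa : w a = v k := by
    rw [hw, Perm.mul_apply, Equiv.swap_apply_left]
  have ia : w⁻¹ a = b := by rw [← wb]; exact Equiv.symm_apply_apply w b
  have ib : w⁻¹ b = k := by rw [← wk]; exact Equiv.symm_apply_apply w k
  rw [ia, ib] at hBinv
  rw [wa, wb] at hBab
  have hak : a < k := lt_trans hab' hBinv
  have hvk : v k < v a := by rw [hva]; exact lt_trans hBab hab'
  have := invLength_mul_swap_lt hak hvk
  rw [← hw] at this
  omega

lemma helper2 {v w : Perm (Fin n)} {a b k : Fin n} (hab : (b : ℕ) = (a : ℕ) + 1)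
    (hka : k ≠ a) (hkb : k ≠ b) (hva : v a = b) (hvb : v b = a)
    (hw : w = v * Equiv.swap b k) (hlen : invLength w = invLength v + 1)
    (hBab : w a < w b) (hBinv : w⁻¹ a < w⁻¹ b) : False := by
  have hab' : a < b := by rw [Fin.lt_def]; omega
  have wa : w a = b := by
    rw [hw, Perm.mul_apply, Equiv.swap_apply_of_ne_of_ne (ne_of_lt hab') (Ne.symm hka), hva]
  have wk : w k = a := by
    rw [hw, Perm.mul_apply, Equiv.swap_apply_right, hvb]
  have wb : w b = v k := by
    rw [hw, Perm.mul_apply, Equiv.swap_apply_left]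
  have ib : w⁻¹ b = a := by rw [← wa]; exact Equiv.symm_apply_apply w a
  have ia : w⁻¹ a = k := by rw [← wk]; exact Equiv.symm_apply_apply w k
  rw [ia, ib] at hBinv
  rw [wa, wb] at hBab
  have hkb' : k < b := lt_trans hBinv hab'
  have hvk : v b < v k := by rw [hvb]; exact lt_trans hab' hBab
  have := invLength_mul_swap_lt hkb' hvk
  rw [Equiv.swap_comm k b, ← hw] at this
  omega

end BruhatAux

open BruhatAux

/-- Let `s` be an adjacent transposition and `w ∈ S_n` with `ℓ(sws) = ℓ(w) + 2`.
Then there is no `v ≤ w` with `ℓ(v) = ℓ(w) - 1` such that `v` commutes with `s`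
and `s` is a descent of `v`, i.e. `ℓ(sv) = ℓ(v) - 1`. -/
theorem not_exists_commuting_coatom {n : ℕ} (w : Perm (Fin n)) (a b : Fin n)
    (hab : (b : ℕ) = (a : ℕ) + 1)
    (h : invLength (Equiv.swap a b * w * Equiv.swap a b) = invLength w + 2) :
    ¬ ∃ v : Perm (Fin n), bruhatLE v w ∧ invLength w = invLength v + 1 ∧
        Equiv.swap a b * v = v * Equiv.swap a b ∧
        invLength v = invLength (Equiv.swap a b * v) + 1 := by
  --begin proof

  rintro ⟨v, hvw, hlen, hcomm, hdesc⟩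
  have hab' : a < b := by rw [Fin.lt_def]; omega
  have hne : a ≠ b := ne_of_lt hab'
  -- Step A: v a = b and v b = a
  have h1 : Equiv.swap a b (v a) = v b := by
    have := congrArg (fun u : Perm (Fin n) => u a) hcomm
    simpa [Perm.mul_apply, Equiv.swap_apply_left] using this
  have hA : v a = b ∧ v b = a := by
    by_cases hva : v a = a
    · exfalso
      have hvb : v b = b := by rw [← h1, hva, Equiv.swap_apply_left]
      have hlt : v a < v b := by rw [hva, hvb]; exact hab'
      have := invLength_lt_mul_swap hab' hlt
      rw [← hcomm] at this
      omega
    · by_cases hvab : v a = b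
      · exact ⟨hvab, by rw [← h1, hvab, Equiv.swap_apply_right]⟩
      · exfalso
        rw [Equiv.swap_apply_of_ne_of_ne hva hvab] at h1
        exact hne (v.injective h1)
  obtain ⟨hva, hvb⟩ := hA
  -- Step B1: w a < w b
  have hBab : w a < w b := by
    by_contra hcon
    have hne2 : w b ≠ w a := fun hc => hne (w.injective hc.symm)
    have hlt : w b < w a := lt_of_le_of_ne (not_lt.1 hcon) hne2
    have h1' := invLength_mul_swap_lt hab' hlt
    have h2' := invLength_adjswap_mul_le hab (w * Equiv.swap a b)
    rw [mul_assoc] at h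
    omega
  -- Step B2: w⁻¹ a < w⁻¹ b
  have hBinv : w⁻¹ a < w⁻¹ b := by
    by_contra hcon
    have hne2 : w⁻¹ b ≠ w⁻¹ a := fun hc => hne ((w⁻¹).injective hc.symm)
    have hlt : w⁻¹ b < w⁻¹ a := lt_of_le_of_ne (not_lt.1 hcon) hne2
    have h1' := invLength_mul_swap_lt hab' hlt
    have e : invLength (w⁻¹ * Equiv.swap a b) = invLength (Equiv.swap a b * w) := by
      rw [← invLength_inv (w⁻¹ * Equiv.swap a b), mul_inv_rev, Equiv.swap_inv, inv_inv]
    rw [e, invLength_inv] at h1'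
    have h2' := invLength_mul_adjswap_le hab (Equiv.swap a b * w)
    omega
  -- Step C: extract the cover transposition
  obtain ⟨i, j, hij, hw⟩ := cover_step hvw hlen
  -- Step D: case analysis
  have case2 : w = v * Equiv.swap a b → False := by
    intro hw2
    have e : invLength w = invLength (Equiv.swap a b * v) := by rw [hw2, ← hcomm]
    omega
  by_cases hia : i = a
  · by_cases hjb : j = b
    · exact case2 (by rw [hw, hia, hjb])
    · have hja : j ≠ a := by rw [← hia]; exact hij.symm
      exact helper1 hab hja hjb hva hvb (by rw [hw, hia]) hlen hBab hBinv
  · by_cases hib : i = b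
    · by_cases hja : j = a
      · exact case2 (by rw [hw, hib, hja, Equiv.swap_comm b a])
      · have hjb : j ≠ b := by rw [← hib]; exact hij.symm
        exact helper2 hab hja hjb hva hvb (by rw [hw, hib]) hlen hBab hBinv
    · by_cases hja : j = a
      · exact helper1 hab hia hib hva hvb
          (by rw [hw, hja, Equiv.swap_comm i a]) hlen hBab hBinv
      · by_cases hjb : j = b
        · exact helper2 hab hia hib hva hvb
            (by rw [hw, hjb, Equiv.swap_comm i b]) hlen hBab hBinv
        · -- disjoint
          have wa : w a = b := by
            rw [hw, Perm.mul_apply,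
              Equiv.swap_apply_of_ne_of_ne (Ne.symm (fun hc => hia hc)) (Ne.symm (fun hc => hja hc)), hva]
          have wb : w b = a := by
            rw [hw, Perm.mul_apply,
              Equiv.swap_apply_of_ne_of_ne (Ne.symm (fun hc => hib hc)) (Ne.symm (fun hc => hjb hc)), hvb]
          rw [wa, wb, Fin.lt_def] at hBab
          omega
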